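/- Suppose L∂_j b_i = ρ h_{ij} where h_{ij} = L L_{ij} (angular metric tensor, with L_{ij} = ∂²L/∂y^i∂y^j), τ = L/β, m_i = b_i − (1/τ) l_i with l_i = ∂L/∂y^i. Then the second derivatives of *L = L²/β satisfy *L_{ij} = (2τ − ρτ²) L_{ij} + (2τ²/β) m_i m_j. -/

import Mathlib

open BigOperators Finset

section Helpers

variable {E : Type*} [NormedAddCommGroup E] [NormedSpace ℝ E]
variable {f g : E → ℝ} {x : E} {v : E}

private lemma fd_mul (hf : DifferentiableAt ℝ f x) (hg : DifferentiableAt ℝ g x) (v : E) :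
    fderiv ℝ (fun z => f z * g z) x v
      = f x * fderiv ℝ g x v + g x * fderiv ℝ f x v := by
  rw [fderiv_fun_mul hf hg]; simp

private lemma fd_const_mul (hf : DifferentiableAt ℝ f x) (c : ℝ) (v : E) :
    fderiv ℝ (fun z => c * f z) x v = c * fderiv ℝ f x v := by
  rw [fderiv_const_mul hf c]; simp

private lemma fd_inv (hg : DifferentiableAt ℝ g x) (hgx : g x ≠ 0) (v : E) :
    fderiv ℝ (fun z => (g z)⁻¹) x v = -(fderiv ℝ g x v) / g x ^ 2 := by
  have h := (hasFDerivAt_inv hgx).comp x hg.hasFDerivAt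
  have h2 : fderiv ℝ (fun z => (g z)⁻¹) x
      = (ContinuousLinearMap.smulRight (1 : ℝ →L[ℝ] ℝ) (-(g x ^ 2)⁻¹)).comp (fderiv ℝ g x) :=
    h.fderiv
  rw [h2]
  simp [ContinuousLinearMap.comp_apply, mul_comm, div_eq_mul_inv]

private lemma fd_div (hf : DifferentiableAt ℝ f x) (hg : DifferentiableAt ℝ g x)
    (hgx : g x ≠ 0) (v : E) :
    fderiv ℝ (fun z => f z / g z) x v
      = (fderiv ℝ f x v * g x - f x * fderiv ℝ g x v) / g x ^ 2 := by
  have h : (fun z => f z / g z) = fun z => f z * (g z)⁻¹ := by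
    funext z; rw [div_eq_mul_inv]
  rw [h, fd_mul (g := fun z => (g z)⁻¹) hf (hg.inv hgx), fd_inv hg hgx]
  field_simp
  ring

private lemma fd_sub {f g : E → ℝ} (hf : DifferentiableAt ℝ f x)
    (hg : DifferentiableAt ℝ g x) (v : E) :
    fderiv ℝ (fun z => f z - g z) x v = fderiv ℝ f x v - fderiv ℝ g x v := by
  rw [fderiv_fun_sub hf hg]; simp

private lemma fd_sq (hf : DifferentiableAt ℝ f x) (v : E) :
    fderiv ℝ (fun z => f z ^ 2) x v = 2 * f x * fderiv ℝ f x v := by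
  have h : (fun z => f z ^ 2) = fun z => f z * f z := by funext z; ring
  rw [h, fd_mul hf hf]; ring

end Helpers

/-- Second partial derivatives of the Kropina change with an h-vector:
`*L_{ij} = (2τ − ρτ²) L_{ij} + (2τ²/β) m_i m_j`, where `b_i = ∂_i β` satisfies the
h-vector condition `L ∂_j b_i = ρ h_{ij}` with `h_{ij} = L L_{ij}`,
`τ = L/β`, `m_i = b_i − (β/L) l_i`, `l_i = ∂_i L`. -/
theorem kropina_second_derivative {n : ℕ}
    (L β : (Fin n → ℝ) → ℝ) (y : Fin n → ℝ)
    (hL : ContDiffAt ℝ 2 L y) (hβ : ContDiffAt ℝ 2 β y)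
    (hLne : L y ≠ 0) (hβne : β y ≠ 0)
    (l b : Fin n → ℝ)
    (hl : ∀ i, l i = fderiv ℝ L y (Pi.single i 1))
    (hb : ∀ i, b i = fderiv ℝ β y (Pi.single i 1))
    -- Euler relations from positive 1-homogeneity of `L` and `β`
    (hEulerL : ∑ i, l i * y i = L y) (hEulerβ : ∑ i, b i * y i = β y)
    (Lij βij : Fin n → Fin n → ℝ)
    (hLij : ∀ i j, Lij i j =
      fderiv ℝ (fun z => fderiv ℝ L z (Pi.single i 1)) y (Pi.single j 1))
    (hβij : ∀ i j, βij i j =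
      fderiv ℝ (fun z => fderiv ℝ β z (Pi.single i 1)) y (Pi.single j 1))
    (ρ : ℝ)
    -- h-vector condition `L ∂_j b_i = ρ h_{ij}` with `h_{ij} = L L_{ij}`
    (hhvec : ∀ i j, L y * βij i j = ρ * (L y * Lij i j))
    (τ : ℝ) (hτ : τ = L y / β y)
    (m : Fin n → ℝ) (hm : ∀ i, m i = b i - (β y / L y) * l i)
    (starL : (Fin n → ℝ) → ℝ) (hstarL : ∀ z, starL z = (L z) ^ 2 / β z) :
    ∀ i j, fderiv ℝ (fun z => fderiv ℝ starL z (Pi.single i 1)) y (Pi.single j 1) =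
      (2 * τ - ρ * τ ^ 2) * Lij i j + (2 * τ ^ 2 / β y) * m i * m j := by
  intro i j
  set e : Fin n → (Fin n → ℝ) := fun k => Pi.single k 1 with he
  -- the function z ↦ ∂_i L (z) and its β analogue
  set DL : (Fin n → ℝ) → ℝ := fun z => fderiv ℝ L z (e i) with hDLdef
  set Dβ : (Fin n → ℝ) → ℝ := fun z => fderiv ℝ β z (e i) with hDβdef
  set G : (Fin n → ℝ) → ℝ :=
    fun z => 2 * L z * DL z / β z - L z ^ 2 * Dβ z / β z ^ 2 with hGdef
  -- Step 1: near y, ∂_i starL = G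
  have hkey : (fun z => fderiv ℝ starL z (e i)) =ᶠ[nhds y] G := by
    have hLe : ∀ᶠ z in nhds y, ContDiffAt ℝ 2 L z := hL.eventually (by norm_num)
    have hβe : ∀ᶠ z in nhds y, ContDiffAt ℝ 2 β z := hβ.eventually (by norm_num)
    have hβne' : ∀ᶠ z in nhds y, β z ≠ 0 := hβ.continuousAt.eventually_ne hβne
    filter_upwards [hLe, hβe, hβne'] with z hLz hβz hβz0
    have hLd : DifferentiableAt ℝ L z := hLz.differentiableAt two_ne_zero
    have hβd : DifferentiableAt ℝ β z := hβz.differentiableAt two_ne_zero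
    have hsq : DifferentiableAt ℝ (fun w => L w ^ 2) z := by
      have : (fun w => L w ^ 2) = fun w => L w * L w := by funext w; ring
      rw [this]; exact hLd.mul hLd
    have hstar : starL = fun w => L w ^ 2 / β w := by funext w; exact hstarL w
    rw [hstar, fd_div hsq hβd hβz0, fd_sq hLd]
    show _ = 2 * L z * fderiv ℝ L z (e i) / β z - L z ^ 2 * fderiv ℝ β z (e i) / β z ^ 2
    field_simp
  -- Step 2: reduce to the derivative of G
  have hred : fderiv ℝ (fun z => fderiv ℝ starL z (e i)) y (e j) = fderiv ℝ G y (e j) := by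
    rw [hkey.fderiv_eq]
  rw [hred]
  -- Step 3: differentiability of all pieces at y
  have hLd : DifferentiableAt ℝ L y := hL.differentiableAt two_ne_zero
  have hβd : DifferentiableAt ℝ β y := hβ.differentiableAt two_ne_zero
  have hDLd : DifferentiableAt ℝ DL y := by
    have h1 : ContDiffAt ℝ 1 (fderiv ℝ L) y := hL.fderiv_right (by norm_num)
    exact (h1.differentiableAt one_ne_zero).clm_apply (differentiableAt_const _)
  have hDβd : DifferentiableAt ℝ Dβ y := by
    have h1 : ContDiffAt ℝ 1 (fderiv ℝ β) y := hβ.fderiv_right (by norm_num)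
    exact (h1.differentiableAt one_ne_zero).clm_apply (differentiableAt_const _)
  have h2L : DifferentiableAt ℝ (fun z => 2 * L z) y := hLd.const_mul 2
  have hnum1 : DifferentiableAt ℝ (fun z => 2 * L z * DL z) y := h2L.mul hDLd
  have hsqL : DifferentiableAt ℝ (fun z => L z ^ 2) y := by
    have : (fun w => L w ^ 2) = fun w => L w * L w := by funext w; ring
    rw [this]; exact hLd.mul hLd
  have hnum2 : DifferentiableAt ℝ (fun z => L z ^ 2 * Dβ z) y := hsqL.mul hDβd
  have hsqβ : DifferentiableAt ℝ (fun z => β z ^ 2) y := by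
    have : (fun w => β w ^ 2) = fun w => β w * β w := by funext w; ring
    rw [this]; exact hβd.mul hβd
  have hβsqne : β y ^ 2 ≠ 0 := pow_ne_zero _ hβne
  have hG1 : DifferentiableAt ℝ (fun z => 2 * L z * DL z / β z) y := by
    have : (fun z => 2 * L z * DL z / β z) = fun z => (2 * L z * DL z) * (β z)⁻¹ := by
      funext z; rw [div_eq_mul_inv]
    rw [this]; exact hnum1.mul (hβd.inv hβne)
  have hG2 : DifferentiableAt ℝ (fun z => L z ^ 2 * Dβ z / β z ^ 2) y := by
    have : (fun z => L z ^ 2 * Dβ z / β z ^ 2) = fun z => (L z ^ 2 * Dβ z) * (β z ^ 2)⁻¹ := by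
      funext z; rw [div_eq_mul_inv]
    rw [this]; exact hnum2.mul (hsqβ.inv hβsqne)
  -- values of the directional derivatives
  have hDLy : DL y = l i := (hl i).symm
  have hDβy : Dβ y = b i := (hb i).symm
  have hLj : fderiv ℝ L y (e j) = l j := (hl j).symm
  have hβj : fderiv ℝ β y (e j) = b j := (hb j).symm
  have hDLj : fderiv ℝ DL y (e j) = Lij i j := (hLij i j).symm
  have hDβj : fderiv ℝ Dβ y (e j) = βij i j := (hβij i j).symm
  -- compute the derivative of G
  show fderiv ℝ (fun z => 2 * L z * DL z / β z - L z ^ 2 * Dβ z / β z ^ 2) y (e j) = _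
  rw [fd_sub hG1 hG2, fd_div hnum1 hβd hβne, fd_div hnum2 hsqβ hβsqne,
    fd_mul h2L hDLd, fd_mul hsqL hDβd, fd_const_mul hLd, fd_sq hLd, fd_sq hβd,
    hDLy, hDβy, hLj, hβj, hDLj, hDβj]
  -- algebra
  have hρ : βij i j = ρ * Lij i j := by
    apply mul_left_cancel₀ hLne
    rw [hhvec i j]; ring
  rw [hρ, hτ, hm i, hm j]
  field_simp
  ring
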